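/- (Lemma on the exponential of the class block, general form.) For all t ≥ 0, the matrix exponential of tB satisfies e^{tB} = I_r ⊗ e^{tV} + ( ∫_0^t col( e^{(t−s)V}A_1, …, e^{(t−s)V}A_r ) e^{s(V+G)} ds ) (1_r^T ⊗ I_n), where the integral is taken entrywise over s ∈ [0,t]. -/

import Mathlib

open Matrix

noncomputable section

/-- The block matrix `B ∈ ℝ^{rn×rn}` whose `(i,j)` block equals `A i + δ_{ij} V`. -/
def blockB {r n : ℕ} (V : Matrix (Fin n) (Fin n) ℝ) (A : Fin r → Matrix (Fin n) (Fin n) ℝ) :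
    Matrix (Fin r × Fin n) (Fin r × Fin n) ℝ :=
  Matrix.of fun p q => A p.1 p.2 q.2 + if p.1 = q.1 then V p.2 q.2 else 0

/-- The aggregation matrix `1_rᵀ ⊗ I_n ∈ ℝ^{n×rn}`, i.e. the block row `(I_n, …, I_n)`. -/
def aggMat (r n : ℕ) : Matrix (Fin n) (Fin r × Fin n) ℝ :=
  Matrix.of fun a q => if a = q.2 then 1 else 0

section Aux

open NormedSpace

attribute [local instance] Matrix.linftyOpNormedRing Matrix.linftyOpNormedAlgebra
  Matrix.linftyOpNormedAddCommGroup Matrix.linftyOpNormedSpace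

lemma exp_smul_mul_exp_smul {𝔸 : Type*} [NormedRing 𝔸] [NormedAlgebra ℝ 𝔸] [CompleteSpace 𝔸]
    (X : 𝔸) (u v : ℝ) : exp (u • X) * exp (v • X) = exp ((u + v) • X) := by
  let +nondep : NormedAlgebra ℚ 𝔸 := .restrictScalars ℚ ℝ 𝔸
  rw [add_smul, exp_add_of_commute (((Commute.refl X).smul_left u).smul_right v)]

/-- Duhamel / variation-of-constants formula in a Banach algebra. -/
lemma duhamel {𝔸 : Type*} [NormedRing 𝔸] [NormedAlgebra ℝ 𝔸] [CompleteSpace 𝔸]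
    (X Y : 𝔸) (t : ℝ) :
    exp (t • (X + Y)) = exp (t • X) +
      ∫ s in (0:ℝ)..t, exp ((t - s) • X) * Y * exp (s • (X + Y)) := by
  let +nondep : NormedAlgebra ℚ 𝔸 := .restrictScalars ℚ ℝ 𝔸
  have hXexp : ∀ u : ℝ, exp (u • X) * X = X * exp (u • X) := fun u =>
    (((Commute.refl X).smul_left u).exp_left).symm ▸ rfl
  set φ : ℝ → 𝔸 := fun s => exp ((-s) • X) * exp (s • (X + Y)) with hφ
  have hderiv : ∀ s : ℝ, HasDerivAt φ
      (exp ((-s) • X) * Y * exp (s • (X + Y))) s := by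
    intro s
    have h1 : HasDerivAt (fun u : ℝ => exp (u • X))
        (X * exp ((-s) • X)) (-s) := hasDerivAt_exp_smul_const' X (-s)
    have hneg : HasDerivAt (fun u : ℝ => -u) (-1 : ℝ) s := (hasDerivAt_id s).neg
    have h1' : HasDerivAt (fun u : ℝ => exp ((-u) • X))
        ((-1 : ℝ) • (X * exp ((-s) • X))) s := h1.scomp s hneg
    have h2 : HasDerivAt (fun u : ℝ => exp (u • (X + Y)))
        ((X + Y) * exp (s • (X + Y))) s := hasDerivAt_exp_smul_const' (X + Y) s
    have := h1'.mul h2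
    convert this using 1
    · rfl
    rw [neg_one_smul]
    rw [← hXexp]
    ring_nf
    noncomm_ring
  have hcont : Continuous fun s : ℝ => exp ((-s) • X) * Y * exp (s • (X + Y)) := by
    exact ((exp_continuous.comp (continuous_neg.smul continuous_const)).mul
      continuous_const).mul (exp_continuous.comp (continuous_id.smul continuous_const))
  have hFTC := intervalIntegral.integral_eq_sub_of_hasDerivAt
      (fun s _ => hderiv s) ((hcont.intervalIntegrable (μ := MeasureTheory.volume) 0 t))
  have hφ0 : φ 0 = 1 := by simp [hφ, exp_zero]
  have key : exp (t • X) * ∫ s in (0:ℝ)..t, exp ((-s) • X) * Y * exp (s • (X + Y))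
      = exp (t • (X + Y)) - exp (t • X) := by
    rw [hFTC, hφ0, hφ]
    rw [mul_sub, mul_one, ← mul_assoc, exp_smul_mul_exp_smul, add_neg_cancel, zero_smul,
      exp_zero, one_mul]
  have hL := (ContinuousLinearMap.mul ℝ 𝔸 (exp (t • X))).intervalIntegral_comp_comm
      (hcont.intervalIntegrable (μ := MeasureTheory.volume) 0 t)
  simp only [ContinuousLinearMap.mul_apply'] at hL
  rw [key] at hL
  have : ∀ s : ℝ, exp (t • X) * (exp ((-s) • X) * Y * exp (s • (X + Y)))
      = exp ((t - s) • X) * Y * exp (s • (X + Y)) := by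
    intro s
    rw [← mul_assoc, ← mul_assoc, exp_smul_mul_exp_smul]
    ring_nf
  rw [intervalIntegral.integral_congr (fun s _ => this s)] at hL
  rw [hL]; abel

variable {r n : ℕ}

/-- The column block matrix `col(A_1, …, A_r)`. -/
def colMat (A : Fin r → Matrix (Fin n) (Fin n) ℝ) : Matrix (Fin r × Fin n) (Fin n) ℝ :=
  Matrix.of fun p c => A p.1 p.2 c

/-- The block diagonal matrix `I_r ⊗ V`. -/
def diagMat (r : ℕ) {n : ℕ} (V : Matrix (Fin n) (Fin n) ℝ) :
    Matrix (Fin r × Fin n) (Fin r × Fin n) ℝ :=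
  Matrix.of fun p q => if p.1 = q.1 then V p.2 q.2 else 0

lemma blockB_decomp (V : Matrix (Fin n) (Fin n) ℝ) (A : Fin r → Matrix (Fin n) (Fin n) ℝ) :
    blockB V A = diagMat r V + colMat A * aggMat r n := by
  ext ⟨i, a⟩ ⟨j, b⟩
  simp only [blockB, diagMat, colMat, aggMat, Matrix.add_apply, Matrix.mul_apply, Matrix.of_apply,
    mul_ite, mul_one, mul_zero]
  rw [Finset.sum_ite_eq' Finset.univ b (fun c => A i a c)]
  simp [add_comm]

lemma smul_diagMat (t : ℝ) (V : Matrix (Fin n) (Fin n) ℝ) :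
    t • diagMat r V = diagMat r (t • V) := by
  ext ⟨i, a⟩ ⟨j, b⟩
  simp only [diagMat, Matrix.smul_apply, Matrix.of_apply]
  split <;> simp

lemma agg_mul_blockB (V : Matrix (Fin n) (Fin n) ℝ) (A : Fin r → Matrix (Fin n) (Fin n) ℝ) :
    aggMat r n * blockB V A = (V + ∑ i, A i) * aggMat r n := by
  ext a ⟨j, b⟩
  simp only [blockB, aggMat, Matrix.mul_apply, Matrix.of_apply, Matrix.add_apply,
    Finset.sum_apply, ite_mul, one_mul, zero_mul, mul_ite, mul_one, mul_zero]
  rw [Fintype.sum_prod_type]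
  simp only [Finset.sum_ite_eq Finset.univ a, Finset.mem_univ, if_true]
  rw [Finset.sum_add_distrib, Finset.sum_ite_eq' Finset.univ j (fun _ => V a b),
    Finset.sum_ite_eq' Finset.univ b (fun x => V a x + (∑ i, A i) a x)]
  simp [Matrix.sum_apply, add_comm]

lemma diagMat_exp (W : Matrix (Fin n) (Fin n) ℝ) :
    exp (diagMat r W) =
      Matrix.of (fun p q => if p.1 = q.1 then exp W p.2 q.2 else 0 :
        Fin r × Fin n → Fin r × Fin n → ℝ) := by
  have h1 : diagMat r W = Matrix.reindexAlgEquiv ℝ ℝ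
      (Equiv.prodComm (Fin n) (Fin r)) (Matrix.blockDiagonal fun _ : Fin r => W) := by
    ext ⟨i, a⟩ ⟨j, b⟩
    simp [diagMat, Matrix.blockDiagonal_apply, eq_comm]
  have hcont : Continuous (Matrix.reindexAlgEquiv ℝ ℝ (Equiv.prodComm (Fin n) (Fin r)) :
      Matrix (Fin n × Fin r) (Fin n × Fin r) ℝ → Matrix (Fin r × Fin n) (Fin r × Fin n) ℝ) :=
    LinearMap.continuous_of_finiteDimensional
      (Matrix.reindexAlgEquiv ℝ ℝ (Equiv.prodComm (Fin n) (Fin r))).toLinearMap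
  rw [h1]
  erw [← map_exp _ hcont]
  erw [Matrix.exp_blockDiagonal]
  ext ⟨i, a⟩ ⟨j, b⟩
  simp [Matrix.blockDiagonal_apply, eq_comm]
  congr 1
  erw [Pi.coe_exp]
  rfl

lemma agg_mul_exp (M : Matrix (Fin n) (Fin n) ℝ)
    (N : Matrix (Fin r × Fin n) (Fin r × Fin n) ℝ)
    (h : aggMat r n * N = M * aggMat r n) :
    aggMat r n * exp N = exp M * aggMat r n := by
  have hpow : ∀ k : ℕ, aggMat r n * N ^ k = M ^ k * aggMat r n := by
    intro k
    induction k with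
    | zero => simp
    | succ k ih => rw [pow_succ, ← Matrix.mul_assoc, ih, Matrix.mul_assoc, h, ← Matrix.mul_assoc,
        ← pow_succ]
  let L1 : Matrix (Fin r × Fin n) (Fin r × Fin n) ℝ →ₗ[ℝ] Matrix (Fin n) (Fin r × Fin n) ℝ :=
    { toFun := fun P => aggMat r n * P
      map_add' := fun _ _ => Matrix.mul_add _ _ _
      map_smul' := fun c P => Matrix.mul_smul _ c P }
  let L2 : Matrix (Fin n) (Fin n) ℝ →ₗ[ℝ] Matrix (Fin n) (Fin r × Fin n) ℝ :=
    { toFun := fun P => P * aggMat r n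
      map_add' := fun _ _ => Matrix.add_mul _ _ _
      map_smul' := fun c P => Matrix.smul_mul c P _ }
  have h1 : aggMat r n * exp N = (L1.toContinuousLinearMap) (exp N) := rfl
  have h2 : exp M * aggMat r n = (L2.toContinuousLinearMap) (exp M) := rfl
  rw [h1, h2, exp_eq_tsum ℝ, exp_eq_tsum ℝ]
  beta_reduce
  erw [ContinuousLinearMap.map_tsum _ (expSeries_summable' (𝕂 := ℝ) N),
    ContinuousLinearMap.map_tsum _ (expSeries_summable' (𝕂 := ℝ) M)]
  congr 1
  funext k
  show aggMat r n * ((k.factorial : ℝ)⁻¹ • N ^ k) = ((k.factorial : ℝ)⁻¹ • M ^ k) * aggMat r n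
  rw [Matrix.mul_smul, hpow k, Matrix.smul_mul]

lemma entry_formula (W Z : Matrix (Fin n) (Fin n) ℝ) (A : Fin r → Matrix (Fin n) (Fin n) ℝ)
    (i j : Fin r) (a b : Fin n) :
    (exp (diagMat r W) * (colMat A * (Z * aggMat r n))) (i, a) (j, b)
      = (exp W * A i * Z) a b := by
  rw [diagMat_exp]
  simp only [Matrix.mul_apply, Matrix.of_apply, aggMat, colMat, Fintype.sum_prod_type,
    ite_mul, zero_mul, mul_ite, mul_one, mul_zero]
  rw [Finset.sum_comm]
  simp only [Finset.sum_ite_eq, Finset.sum_ite_eq', Finset.mem_univ, if_true]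
  simp only [Finset.mul_sum, Finset.sum_mul, mul_assoc]
  rw [Finset.sum_comm]

lemma stmt6_aux (V : Matrix (Fin n) (Fin n) ℝ) (A : Fin r → Matrix (Fin n) (Fin n) ℝ)
    (G : Matrix (Fin n) (Fin n) ℝ) (hG : G = ∑ i, A i) (t : ℝ)
    (i j : Fin r) (a b : Fin n) :
    exp (t • blockB V A) (i, a) (j, b) =
      (if i = j then exp (t • V) a b else 0) +
      ∫ s in (0:ℝ)..t,
        (exp ((t - s) • V) * A i * exp (s • (V + G))) a b := by
  have hdecomp := blockB_decomp V A
  have hd := duhamel (diagMat r V) (colMat A * aggMat r n) t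
  rw [← hdecomp] at hd
  have hint : ∀ s : ℝ,
      aggMat r n * exp (s • blockB V A) = exp (s • (V + G)) * aggMat r n := by
    intro s
    apply agg_mul_exp
    rw [Matrix.mul_smul, Matrix.smul_mul, agg_mul_blockB, hG]
  have hcont : Continuous fun s : ℝ =>
      exp ((t - s) • diagMat r V) * (colMat A * aggMat r n) * exp (s • blockB V A) := by
    exact ((exp_continuous.comp ((continuous_const.sub continuous_id).smul continuous_const)).mul
      continuous_const).mul (exp_continuous.comp (continuous_id.smul continuous_const))
  let E : Matrix (Fin r × Fin n) (Fin r × Fin n) ℝ →ₗ[ℝ] ℝ :=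
    { toFun := fun M => M (i, a) (j, b)
      map_add' := fun _ _ => rfl
      map_smul' := fun _ _ => rfl }
  have hE := (E.toContinuousLinearMap).intervalIntegral_comp_comm
      (hcont.intervalIntegrable (μ := MeasureTheory.volume) 0 t)
  have hEc : ∀ M : Matrix (Fin r × Fin n) (Fin r × Fin n) ℝ,
      (E.toContinuousLinearMap) M = M (i, a) (j, b) := fun _ => rfl
  have hpt : ∀ s : ℝ,
      (exp ((t - s) • diagMat r V) * (colMat A * aggMat r n) * exp (s • blockB V A))
          (i, a) (j, b)
      = (exp ((t - s) • V) * A i * exp (s • (V + G))) a b := by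
    intro s
    rw [Matrix.mul_assoc, Matrix.mul_assoc, hint s, smul_diagMat]
    exact entry_formula ((t - s) • V) (exp (s • (V + G))) A i j a b
  rw [show exp (t • blockB V A) = exp (t • diagMat r V) + ∫ s in (0:ℝ)..t,
      exp ((t - s) • diagMat r V) * (colMat A * aggMat r n) * exp (s • blockB V A) from hd,
    Matrix.add_apply, smul_diagMat, diagMat_exp]
  congr 1
  refine ((hEc _).symm.trans hE.symm).trans ?_
  exact intervalIntegral.integral_congr fun s _ => (hEc _).trans (hpt s)
end Aux

/-!
Statement 6 (exponential of the class block, general form): for `t ≥ 0`,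
`e^{tB} = I_r ⊗ e^{tV} + (∫₀ᵗ col(e^{(t−s)V}A_1, …, e^{(t−s)V}A_r) e^{s(V+G)} ds)(1_rᵀ ⊗ I_n)`,
stated entrywise.
-/

theorem stmt6_exp_block {r n : ℕ} (hr : 1 ≤ r)
    (V : Matrix (Fin n) (Fin n) ℝ) (A : Fin r → Matrix (Fin n) (Fin n) ℝ)
    (G : Matrix (Fin n) (Fin n) ℝ) (hG : G = ∑ i, A i)
    (t : ℝ) (ht : 0 ≤ t) :
    ∀ (i j : Fin r) (a b : Fin n),
      NormedSpace.exp (t • blockB V A) (i, a) (j, b) =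
        (if i = j then NormedSpace.exp (t • V) a b else 0) +
        ∫ s in (0:ℝ)..t,
          (NormedSpace.exp ((t - s) • V) * A i * NormedSpace.exp (s • (V + G))) a b := by
  intro i j a b
  exact stmt6_aux V A G hG t i j a b

end
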